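/- For any finite sequence of unit vectors φ_1,...,φ_n (n ≥ 2) in a real inner product space, max_{j≠j'} ⟨φ_j, φ_{j'}⟩ ≥ -1/(n-1). -/

import Mathlib

/-- Rankin's simplex bound: for `n ≥ 2` unit vectors in a real inner product
space, `max_{j≠j'} ⟨φ_j, φ_{j'}⟩ ≥ -1/(n-1)`. -/
theorem rankin_simplex_bound {H : Type*} [NormedAddCommGroup H] [InnerProductSpace ℝ H]
    {n : ℕ} (hn : 2 ≤ n) (φ : Fin n → H) (hunit : ∀ j, ‖φ j‖ = 1) :
    ∃ j j', j ≠ j' ∧ -(1 / ((n : ℝ) - 1)) ≤ (inner ℝ (φ j) (φ j') : ℝ) := by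
  by_contra hcon
  push_neg at hcon
  set c : ℝ := -(1 / ((n : ℝ) - 1)) with hc
  have hn1 : (1 : ℝ) ≤ (n : ℝ) - 1 := by
    have : (2 : ℝ) ≤ (n : ℝ) := by exact_mod_cast hn
    linarith
  -- total double sum equals ‖∑ φ i‖²
  have hsq : (0 : ℝ) ≤ ∑ i, ∑ j, (inner ℝ (φ i) (φ j) : ℝ) := by
    have : ∑ i, ∑ j, (inner ℝ (φ i) (φ j) : ℝ) = inner ℝ (∑ i, φ i) (∑ j, φ j) := by
      rw [sum_inner]
      exact Finset.sum_congr rfl fun i _ => by rw [inner_sum]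
    rw [this]
    exact real_inner_self_nonneg
  -- split diagonal
  have hdiag : ∀ i : Fin n, (inner ℝ (φ i) (φ i) : ℝ) = 1 := by
    intro i
    rw [real_inner_self_eq_norm_sq, hunit i]; norm_num
  have hsplit : ∑ i, ∑ j, (inner ℝ (φ i) (φ j) : ℝ)
      = (n : ℝ) + ∑ i, ∑ j ∈ Finset.univ.erase i, (inner ℝ (φ i) (φ j) : ℝ) := by
    have : ∀ i : Fin n, ∑ j, (inner ℝ (φ i) (φ j) : ℝ)
        = 1 + ∑ j ∈ Finset.univ.erase i, (inner ℝ (φ i) (φ j) : ℝ) := by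
      intro i
      rw [← Finset.add_sum_erase _ _ (Finset.mem_univ i), hdiag i]
    simp only [this, Finset.sum_add_distrib, Finset.sum_const, Finset.card_univ,
      Fintype.card_fin, nsmul_eq_mul, mul_one]
  -- strict bound on off-diagonal sum
  have hoff : ∑ i, ∑ j ∈ Finset.univ.erase i, (inner ℝ (φ i) (φ j) : ℝ)
      < (n : ℝ) * (((n : ℝ) - 1) * c) := by
    have h1 : ∀ i : Fin n, ∑ j ∈ Finset.univ.erase i, (inner ℝ (φ i) (φ j) : ℝ)
        < ((n : ℝ) - 1) * c := by
      intro i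
      have hcard : ((Finset.univ.erase i).card : ℝ) = (n : ℝ) - 1 := by
        rw [Finset.card_erase_of_mem (Finset.mem_univ i), Finset.card_univ, Fintype.card_fin]
        have : 1 ≤ n := by omega
        push_cast [Nat.cast_sub this]
        ring
      have hne : (Finset.univ.erase i).Nonempty := by
        rw [← Finset.card_pos]
        have : 1 ≤ (Finset.univ.erase i).card := by
          rw [Finset.card_erase_of_mem (Finset.mem_univ i), Finset.card_univ, Fintype.card_fin]
          omega
        omega
      calc ∑ j ∈ Finset.univ.erase i, (inner ℝ (φ i) (φ j) : ℝ)
          < ∑ _j ∈ Finset.univ.erase i, c := by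
            apply Finset.sum_lt_sum_of_nonempty hne
            intro j hj
            exact hcon i j (Finset.ne_of_mem_erase hj).symm
        _ = ((n : ℝ) - 1) * c := by rw [Finset.sum_const, nsmul_eq_mul, hcard]
    calc ∑ i, ∑ j ∈ Finset.univ.erase i, (inner ℝ (φ i) (φ j) : ℝ)
        < ∑ _i : Fin n, ((n : ℝ) - 1) * c := by
          apply Finset.sum_lt_sum_of_nonempty
          · exact Finset.univ_nonempty_iff.mpr ⟨⟨0, by omega⟩⟩
          · intro i _; exact h1 i
      _ = (n : ℝ) * (((n : ℝ) - 1) * c) := by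
          rw [Finset.sum_const, Finset.card_univ, Fintype.card_fin, nsmul_eq_mul]
  have hne0 : ((n : ℝ) - 1) ≠ 0 := by linarith
  have : ((n : ℝ) - 1) * c = -1 := by
    rw [hc]; field_simp
  rw [hsplit] at hsq
  rw [this] at hoff
  linarith
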